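/- For G = 1/2 and every N ≥ 1 and 1 ≤ k ≤ N, the entries of the Gini-stable process satisfy p_k^{(N,1/2)} = (1/N)·∑_{i=k}^{N} 1/i = (1/N)(H_N − H_{k−1}), where H_m is the m-th harmonic number. -/
import Mathlib


open Finset Real Filter

/-- Coefficient a_N(G) of the Gini-stable process. -/
noncomputable def giniA (G : ℝ) (N : ℕ) : ℝ :=
  (1 - G) / ((N : ℝ) * (G * ((N : ℝ) - 2) + 1))

/-- Coefficient b_N(G) of the Gini-stable process. -/
noncomputable def giniB (G : ℝ) (N : ℕ) : ℝ :=
  G * ((N : ℝ) - 1) / (G * ((N : ℝ) - 2) + 1)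

/-- Entries p_k^{(N,G)} of the Gini-stable process (1-indexed in k). -/
noncomputable def giniP (G : ℝ) : ℕ → ℕ → ℝ
  | 0, _ => 0
  | 1, k => if k = 1 then 1 else 0
  | N + 2, k =>
      giniA G (N + 2) + giniB G (N + 2) * (if k ≤ N + 1 then giniP G (N + 1) k else 0)

/-- Harmonic number H_m = ∑_{i=1}^m 1/i, with H 0 = 0. -/
noncomputable def H (m : ℕ) : ℝ := ∑ i ∈ Finset.range m, (1 : ℝ) / (i + 1)

lemma H_succ (m : ℕ) : H (m + 1) = H m + 1 / ((m : ℝ) + 1) := by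
  simp [H, Finset.sum_range_succ]

theorem stmt1 (N k : ℕ) (hN : 1 ≤ N) (hk1 : 1 ≤ k) (hkN : k ≤ N) :
    giniP (1/2) N k = (1 / (N : ℝ)) * (H N - H (k - 1)) := by
  induction N with
  | zero => omega
  | succ n ih =>
    match n, ih with
    | 0, _ =>
      interval_cases k
      simp [giniP, H]
    | m + 1, ih =>
      have hm2 : ((m : ℝ) + 2) ≠ 0 := by positivity
      have hm1 : ((m : ℝ) + 1) ≠ 0 := by positivity
      have hA : giniA (1/2) (m + 2) = 1 / ((m : ℝ) + 2)^2 := by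
        unfold giniA
        push_cast
        rw [div_eq_div_iff] <;> ring_nf <;> positivity
      have hB : giniB (1/2) (m + 2) = ((m : ℝ) + 1) / ((m : ℝ) + 2) := by
        unfold giniB
        push_cast
        rw [div_eq_div_iff] <;> ring_nf <;> positivity
      have hH : H (m + 2) = H (m + 1) + 1 / ((m : ℝ) + 2) := by
        rw [show m + 2 = m + 1 + 1 from rfl, H_succ]; push_cast; ring
      show giniA (1/2) (m + 2) + giniB (1/2) (m + 2) *
          (if k ≤ m + 1 then giniP (1/2) (m + 1) k else 0) = _
      by_cases hk : k ≤ m + 1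
      · rw [if_pos hk, ih (by omega) hk, hA, hB]
        push_cast
        rw [hH]
        field_simp
        ring
      · have hkeq : k = m + 2 := by omega
        subst hkeq
        rw [if_neg hk, hA]
        have : m + 2 - 1 = m + 1 := by omega
        rw [this]
        push_cast
        rw [hH]
        field_simp
        ring
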